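/- Angle measures in the model are realized as dihedral angles of planes through the origin, hence the sum of the three angle measures of any triangle of the model (formed by three pairwise intersecting five-point lines with no common point) equals the angle sum of a spherical triangle on the unit sphere centered at O, and is therefore strictly greater than π. -/

import Mathlib

open Real RealInnerProductSpace

noncomputable section

def sphericalAngle (A B C : EuclideanSpace ℝ (Fin 3)) : ℝ :=
  InnerProductGeometry.angle (B - ⟪A, B⟫ • A) (C - ⟪A, C⟫ • A)

/-- The spherical angle of the spherical triangle `A B C` at the vertex `A` (for unit
vectors), i.e. the angle between the tangent directions at `A` towards `B` and `C`;
it equals the dihedral angle of the two planes through the origin spanned by `A, B` and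
by `A, C`. -/
abbrev E3 := EuclideanSpace ℝ (Fin 3)

lemma inner3 (x y : E3) : ⟪x, y⟫ = x 0 * y 0 + x 1 * y 1 + x 2 * y 2 := by
  simp [PiLp.inner_apply, Fin.sum_univ_three, RCLike.inner_apply, mul_comm]

def cross3 (x y : E3) : E3 := WithLp.toLp 2 ![x 1 * y 2 - x 2 * y 1, x 2 * y 0 - x 0 * y 2, x 0 * y 1 - x 1 * y 0]

@[simp] lemma cross3_apply0 (x y : E3) : cross3 x y 0 = x 1 * y 2 - x 2 * y 1 := rfl
@[simp] lemma cross3_apply1 (x y : E3) : cross3 x y 1 = x 2 * y 0 - x 0 * y 2 := rfl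
@[simp] lemma cross3_apply2 (x y : E3) : cross3 x y 2 = x 0 * y 1 - x 1 * y 0 := rfl

lemma angle_eq_of_inner (p q r s : E3) (h : ⟪p,q⟫ = ⟪r,s⟫) (hp : ⟪p,p⟫ = ⟪r,r⟫)
    (hq : ⟪q,q⟫ = ⟪s,s⟫) : InnerProductGeometry.angle p q = InnerProductGeometry.angle r s := by
  unfold InnerProductGeometry.angle
  rw [norm_eq_sqrt_real_inner p, norm_eq_sqrt_real_inner q, norm_eq_sqrt_real_inner r,
    norm_eq_sqrt_real_inner s, h, hp, hq]

lemma sphericalAngle_eq_cross' (A B C : E3) (hA : ‖A‖ = 1) :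
    InnerProductGeometry.angle (B - ⟪A, B⟫ • A) (C - ⟪A, C⟫ • A)
      = InnerProductGeometry.angle (cross3 A B) (cross3 A C) := by
  have hA1 : A 0 ^ 2 + A 1 ^ 2 + A 2 ^ 2 = 1 := by
    have := real_inner_self_eq_norm_sq A
    rw [inner3, hA] at this
    nlinarith [this]
  have e : ∀ X Y : E3, ⟪X - ⟪A, X⟫ • A, Y - ⟪A, Y⟫ • A⟫ = ⟪cross3 A X, cross3 A Y⟫ := by
    intro X Y
    simp only [inner3, PiLp.sub_apply, PiLp.smul_apply, smul_eq_mul, cross3_apply0,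
      cross3_apply1, cross3_apply2]
    linear_combination ((A 0 * X 0 + A 1 * X 1 + A 2 * X 2) * (A 0 * Y 0 + A 1 * Y 1 + A 2 * Y 2)
      - (X 0 * Y 0 + X 1 * Y 1 + X 2 * Y 2)) * hA1
  exact angle_eq_of_inner _ _ _ _ (e B C) (e B B) (e C C)

lemma det_ne_zero (v₁ v₂ v₃ : E3) (h : LinearIndependent ℝ ![v₁, v₂, v₃]) :
    ⟪cross3 v₁ v₂, v₃⟫ ≠ 0 := by
  have h' : LinearIndependent ℝ (Matrix.of ![(v₁ : Fin 3 → ℝ), v₂, v₃]).row := by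
    convert h.map' _ (WithLp.linearEquiv 2 ℝ (Fin 3 → ℝ)).ker using 1
    ext i j; fin_cases i <;> rfl
    all_goals rfl
  rw [Matrix.linearIndependent_rows_iff_isUnit] at h'
  have hd : IsUnit (Matrix.of ![(v₁ : Fin 3 → ℝ), v₂, v₃]).det :=
    (Matrix.isUnit_iff_isUnit_det _).mp h'
  have hd' := hd.ne_zero
  rw [Matrix.det_fin_three] at hd'
  rw [inner3]
  simp only [Matrix.of_apply, Matrix.cons_val', Matrix.cons_val_zero, Matrix.cons_val_one,
    Matrix.head_cons, Matrix.cons_val_two, Matrix.tail_cons, Matrix.empty_val',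
    Matrix.cons_val_fin_one, Matrix.head_fin_const] at hd'
  intro hc
  apply hd'
  simp only [cross3_apply0, cross3_apply1, cross3_apply2] at hc
  linear_combination hc

open InnerProductGeometry in
lemma strict_angle_tri (x y z : E3) (hx : ‖x‖ = 1) (hy : ‖y‖ = 1) (hz : ‖z‖ = 1)
    (hind : ∀ p q r : ℝ, p • x + q • y + r • z = 0 → p = 0 ∧ q = 0 ∧ r = 0) :
    angle x z < angle x y + angle y z := by
  set α := angle x y with hαdef
  set β := angle y z with hβdef
  have hxx : ⟪x,x⟫ = 1 := by rw [real_inner_self_eq_norm_sq, hx]; norm_num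
  have hyy : ⟪y,y⟫ = 1 := by rw [real_inner_self_eq_norm_sq, hy]; norm_num
  have hzz : ⟪z,z⟫ = 1 := by rw [real_inner_self_eq_norm_sq, hz]; norm_num
  have hα0 : α ≠ 0 := by
    intro h0
    obtain ⟨-, r, -, hyx⟩ := angle_eq_zero_iff.mp h0
    have := (hind r (-1) 0 (by rw [hyx]; module)).1
    have h2 := (hind r (-1) 0 (by rw [hyx]; module)).2.1
    norm_num at h2
  have hαπ : α ≠ π := by
    intro h0
    obtain ⟨-, r, -, hyx⟩ := angle_eq_pi_iff.mp h0
    have h2 := (hind r (-1) 0 (by rw [hyx]; module)).2.1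
    norm_num at h2
  have hβ0 : β ≠ 0 := by
    intro h0
    obtain ⟨-, r, -, hzy⟩ := angle_eq_zero_iff.mp h0
    have h2 := (hind 0 r (-1) (by rw [hzy]; module)).2.2
    norm_num at h2
  have hβπ : β ≠ π := by
    intro h0
    obtain ⟨-, r, -, hzy⟩ := angle_eq_pi_iff.mp h0
    have h2 := (hind 0 r (-1) (by rw [hzy]; module)).2.2
    norm_num at h2
  have hαmem : α ∈ Set.Icc 0 π := ⟨angle_nonneg x y, angle_le_pi x y⟩
  have hβmem : β ∈ Set.Icc 0 π := ⟨angle_nonneg y z, angle_le_pi y z⟩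
  have hsα : 0 < Real.sin α :=
    Real.sin_pos_of_pos_of_lt_pi (lt_of_le_of_ne hαmem.1 (Ne.symm hα0))
      (lt_of_le_of_ne hαmem.2 hαπ)
  have hsβ : 0 < Real.sin β :=
    Real.sin_pos_of_pos_of_lt_pi (lt_of_le_of_ne hβmem.1 (Ne.symm hβ0))
      (lt_of_le_of_ne hβmem.2 hβπ)
  have hxy : ⟪x,y⟫ = Real.cos α := by
    rw [hαdef, cos_angle, hx, hy]; ring
  have hyz : ⟪y,z⟫ = Real.cos β := by
    rw [hβdef, cos_angle, hy, hz]; ring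
  have hyx : ⟪y,x⟫ = Real.cos α := by rw [real_inner_comm]; exact hxy
  have hzy : ⟪z,y⟫ = Real.cos β := by rw [real_inner_comm]; exact hyz
  set u : E3 := (Real.sin α)⁻¹ • (x - Real.cos α • y) with hu_def
  set w : E3 := (Real.sin β)⁻¹ • (z - Real.cos β • y) with hw_def
  have huu : ⟪u,u⟫ = 1 := by
    simp only [hu_def, real_inner_smul_left, real_inner_smul_right, inner_sub_left,
      inner_sub_right, hxx, hyy, hxy, hyx]
    have h5 : Real.sin α ≠ 0 := ne_of_gt hsα
    field_simp
    linear_combination -Real.sin_sq_add_cos_sq α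
  have hww : ⟪w,w⟫ = 1 := by
    simp only [hw_def, real_inner_smul_left, real_inner_smul_right, inner_sub_left,
      inner_sub_right, hzz, hyy, hzy, hyz]
    have h5 : Real.sin β ≠ 0 := ne_of_gt hsβ
    field_simp
    linear_combination -Real.sin_sq_add_cos_sq β
  have hun : ‖u‖ = 1 := by
    rw [norm_eq_sqrt_real_inner, huu]; exact Real.sqrt_one
  have hwn : ‖w‖ = 1 := by
    rw [norm_eq_sqrt_real_inner, hww]; exact Real.sqrt_one
  have hne : u ≠ -w := by
    intro he
    have hsum : u + w = 0 := by rw [he]; exact neg_add_cancel w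
    have hrel : (Real.sin α)⁻¹ • x + (-(Real.cos α * (Real.sin α)⁻¹)
        - Real.cos β * (Real.sin β)⁻¹) • y + (Real.sin β)⁻¹ • z = 0 := by
      rw [← hsum, hu_def, hw_def]; module
    have h2 := (hind _ _ _ hrel).1
    have : (Real.sin α)⁻¹ ≠ 0 := inv_ne_zero (ne_of_gt hsα)
    exact this h2
  have hlt : (-1 : ℝ) < ⟪u, w⟫ := by
    have h2 : ⟪u, -w⟫ < 1 := by
      rw [inner_lt_one_iff_real_of_norm_eq_one hun (by rw [norm_neg]; exact hwn)]
      exact hne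
    rw [inner_neg_right] at h2; linarith
  have huw : ⟪u,w⟫ = (Real.sin α)⁻¹ * ((Real.sin β)⁻¹ * (⟪x,z⟫ - Real.cos α * Real.cos β)) := by
    simp only [hu_def, hw_def, real_inner_smul_left, real_inner_smul_right, inner_sub_left,
      inner_sub_right, hyy, hxy, hyz, hyx, hzy]
    ring
  have hxz : Real.cos (α + β) < ⟪x,z⟫ := by
    rw [Real.cos_add]
    rw [huw] at hlt
    have h4 : 0 < Real.sin α * Real.sin β := mul_pos hsα hsβ
    rw [show (Real.sin α)⁻¹ * ((Real.sin β)⁻¹ * (⟪x,z⟫ - Real.cos α * Real.cos β))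
      = (⟪x,z⟫ - Real.cos α * Real.cos β) / (Real.sin α * Real.sin β) by field_simp] at hlt
    rw [lt_div_iff₀ h4] at hlt
    nlinarith
  by_cases hs : α + β ≤ π
  · have hmem2 : α + β ∈ Set.Icc 0 π := ⟨add_nonneg hαmem.1 hβmem.1, hs⟩
    have hmem1 : angle x z ∈ Set.Icc 0 π := ⟨angle_nonneg x z, angle_le_pi x z⟩
    have hcos : Real.cos (α + β) < Real.cos (angle x z) := by
      rw [cos_angle, hx, hz]
      calc Real.cos (α + β) < ⟪x,z⟫ := hxz
        _ = ⟪x,z⟫ / (1 * 1) := by ring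
    by_contra hcon
    push_neg at hcon
    exact absurd (Real.strictAntiOn_cos.antitoneOn hmem2 hmem1 hcon) (not_le.mpr hcos)
  · push_neg at hs
    exact lt_of_le_of_lt (angle_le_pi x z) hs

lemma cross3_anticomm (x y : E3) : cross3 x y = - cross3 y x := by
  ext i
  fin_cases i <;> simp [cross3] <;> ring

lemma cross3_inner_left (x y : E3) : ⟪cross3 x y, x⟫ = 0 := by
  simp only [inner3, cross3_apply0, cross3_apply1, cross3_apply2]; ring

lemma cross3_inner_right (x y : E3) : ⟪cross3 x y, y⟫ = 0 := by
  simp only [inner3, cross3_apply0, cross3_apply1, cross3_apply2]; ring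

lemma cross3_cyclic (x y z : E3) : ⟪cross3 x y, z⟫ = ⟪cross3 y z, x⟫ := by
  simp only [inner3, cross3_apply0, cross3_apply1, cross3_apply2]; ring

open InnerProductGeometry in
theorem model_triangle_angle_sum_gt_pi' :
    ∀ n₁ n₂ n₃ v₁ v₂ v₃ : EuclideanSpace ℝ (Fin 3),
      n₁ 2 ≠ 0 → n₂ 2 ≠ 0 → n₃ 2 ≠ 0 →
      ‖v₁‖ = 1 → ‖v₂‖ = 1 → ‖v₃‖ = 1 →
      ⟪n₂, v₁⟫ = 0 → ⟪n₃, v₁⟫ = 0 →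
      ⟪n₁, v₂⟫ = 0 → ⟪n₃, v₂⟫ = 0 →
      ⟪n₁, v₃⟫ = 0 → ⟪n₂, v₃⟫ = 0 →
      LinearIndependent ℝ ![v₁, v₂, v₃] →
      InnerProductGeometry.angle (v₂ - ⟪v₁, v₂⟫ • v₁) (v₃ - ⟪v₁, v₃⟫ • v₁)
      + InnerProductGeometry.angle (v₃ - ⟪v₂, v₃⟫ • v₂) (v₁ - ⟪v₂, v₁⟫ • v₂)
      + InnerProductGeometry.angle (v₁ - ⟪v₃, v₁⟫ • v₃) (v₂ - ⟪v₃, v₂⟫ • v₃) > π := by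
  intro n₁ n₂ n₃ v₁ v₂ v₃ _ _ _ h1 h2 h3 _ _ _ _ _ _ hli
  set a := cross3 v₂ v₃ with ha
  set b := cross3 v₃ v₁ with hb
  set c := cross3 v₁ v₂ with hc
  set D := ⟪cross3 v₁ v₂, v₃⟫ with hD
  have hDne : D ≠ 0 := det_ne_zero v₁ v₂ v₃ hli
  -- pairings
  have pc3 : ⟪c, v₃⟫ = D := rfl
  have pb2 : ⟪b, v₂⟫ = D := by rw [hb, hD, cross3_cyclic v₃ v₁ v₂]
  have pa1 : ⟪a, v₁⟫ = D := by rw [ha, hD, cross3_cyclic v₂ v₃ v₁, cross3_cyclic v₃ v₁ v₂]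
  have pa2 : ⟪a, v₂⟫ = 0 := cross3_inner_left v₂ v₃
  have pa3 : ⟪a, v₃⟫ = 0 := cross3_inner_right v₂ v₃
  have pb1 : ⟪b, v₁⟫ = 0 := cross3_inner_right v₃ v₁
  have pb3 : ⟪b, v₃⟫ = 0 := cross3_inner_left v₃ v₁
  have pc1 : ⟪c, v₁⟫ = 0 := cross3_inner_left v₁ v₂
  have pc2 : ⟪c, v₂⟫ = 0 := cross3_inner_right v₁ v₂
  have hane : a ≠ 0 := fun h => hDne (by rw [← pa1, h, inner_zero_left])
  have hbne : b ≠ 0 := fun h => hDne (by rw [← pb2, h, inner_zero_left])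
  have hcne : c ≠ 0 := fun h => hDne (by rw [← pc3, h, inner_zero_left])
  have hna : (0:ℝ) < ‖a‖ := norm_pos_iff.mpr hane
  have hnb : (0:ℝ) < ‖b‖ := norm_pos_iff.mpr hbne
  have hnc : (0:ℝ) < ‖c‖ := norm_pos_iff.mpr hcne
  set na := ‖a‖⁻¹ • a with hna_def
  set nb := ‖b‖⁻¹ • b with hnb_def
  set nc := ‖c‖⁻¹ • c with hnc_def
  have huna : ‖na‖ = 1 := norm_smul_inv_norm hane
  have hunb : ‖nb‖ = 1 := norm_smul_inv_norm hbne
  have hunc : ‖nc‖ = 1 := norm_smul_inv_norm hcne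
  -- independence hypothesis for (nc, -nb, na)
  have hind : ∀ p q r : ℝ, p • nc + q • (-nb) + r • na = 0 → p = 0 ∧ q = 0 ∧ r = 0 := by
    intro p q r hrel
    have key : ∀ v : E3, p * (‖c‖⁻¹ * ⟪c, v⟫) + (-q) * (‖b‖⁻¹ * ⟪b, v⟫)
        + r * (‖a‖⁻¹ * ⟪a, v⟫) = 0 := by
      intro v
      have := congrArg (fun t : E3 => ⟪t, v⟫) hrel
      simp only [inner_add_left, real_inner_smul_left, inner_neg_left, inner_zero_left,
        hna_def, hnb_def, hnc_def] at this
      linarith [this]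
    have k3 := key v₃; rw [pc3, pa3, pb3] at k3
    have k2 := key v₂; rw [pc2, pa2, pb2] at k2
    have k1 := key v₁; rw [pc1, pa1, pb1] at k1
    have hp : p = 0 := by
      have h' : p * (‖c‖⁻¹ * D) = 0 := by linarith [k3]
      rcases mul_eq_zero.mp h' with h | h
      · exact h
      · exact absurd h (by positivity)
    have hq : q = 0 := by
      have h' : (-q) * (‖b‖⁻¹ * D) = 0 := by linarith [k2]
      rcases mul_eq_zero.mp h' with h | h
      · linarith
      · exact absurd h (by positivity)
    have hr : r = 0 := by
      have h' : r * (‖a‖⁻¹ * D) = 0 := by linarith [k1]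
      rcases mul_eq_zero.mp h' with h | h
      · exact h
      · exact absurd h (by positivity)
    exact ⟨hp, hq, hr⟩
  have hstrict := strict_angle_tri nc (-nb) na hunc (by rwa [norm_neg]) huna hind
  rw [angle_neg_right nc nb, angle_neg_left nb na] at hstrict
  -- translate normalized angles back
  have hinv : ∀ x : E3, x ≠ 0 → (0:ℝ) < ‖x‖⁻¹ := fun x hx => by
    have := norm_pos_iff.mpr hx; positivity
  have eab : angle nc nb = angle c b := by
    rw [hnc_def, hnb_def, angle_smul_left_of_pos _ _ (hinv c hcne),
      angle_smul_right_of_pos _ _ (hinv b hbne)]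
  have ebc : angle nb na = angle b a := by
    rw [hnb_def, hna_def, angle_smul_left_of_pos _ _ (hinv b hbne),
      angle_smul_right_of_pos _ _ (hinv a hane)]
  have eca : angle nc na = angle c a := by
    rw [hnc_def, hna_def, angle_smul_left_of_pos _ _ (hinv c hcne),
      angle_smul_right_of_pos _ _ (hinv a hane)]
  rw [eab, ebc, eca] at hstrict
  -- rewrite the three spherical angles
  have e1 : InnerProductGeometry.angle (v₂ - ⟪v₁, v₂⟫ • v₁) (v₃ - ⟪v₁, v₃⟫ • v₁)
      = π - angle c b := by
    rw [sphericalAngle_eq_cross' v₁ v₂ v₃ h1, ← hc,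
      show cross3 v₁ v₃ = -b by rw [hb, cross3_anticomm], angle_neg_right]
  have e2 : InnerProductGeometry.angle (v₃ - ⟪v₂, v₃⟫ • v₂) (v₁ - ⟪v₂, v₁⟫ • v₂)
      = π - angle a c := by
    rw [sphericalAngle_eq_cross' v₂ v₃ v₁ h2, ← ha,
      show cross3 v₂ v₁ = -c by rw [hc, cross3_anticomm], angle_neg_right]
  have e3 : InnerProductGeometry.angle (v₁ - ⟪v₃, v₁⟫ • v₃) (v₂ - ⟪v₃, v₂⟫ • v₃)
      = π - angle b a := by
    rw [sphericalAngle_eq_cross' v₃ v₁ v₂ h3, ← hb,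
      show cross3 v₃ v₂ = -a by rw [ha, cross3_anticomm], angle_neg_right]
  rw [e1, e2, e3]
  have hca : angle c a = angle a c := angle_comm c a
  linarith [hstrict, Real.pi_pos, hca ▸ hstrict]

/-- The angles of a triangle of the model are the dihedral angles of the three planes
through the origin cutting out its sides, i.e. the spherical angles of the spherical
triangle whose vertices are unit vectors along the pairwise intersections of the planes;
for any nondegenerate configuration (three planes with non-horizontal, linearly
independent normals) this angle sum strictly exceeds `π`. -/
theorem model_triangle_angle_sum_gt_pi :
    ∀ n₁ n₂ n₃ v₁ v₂ v₃ : EuclideanSpace ℝ (Fin 3),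
      n₁ 2 ≠ 0 → n₂ 2 ≠ 0 → n₃ 2 ≠ 0 →
      ‖v₁‖ = 1 → ‖v₂‖ = 1 → ‖v₃‖ = 1 →
      ⟪n₂, v₁⟫ = 0 → ⟪n₃, v₁⟫ = 0 →
      ⟪n₁, v₂⟫ = 0 → ⟪n₃, v₂⟫ = 0 →
      ⟪n₁, v₃⟫ = 0 → ⟪n₂, v₃⟫ = 0 →
      LinearIndependent ℝ ![v₁, v₂, v₃] →
      sphericalAngle v₁ v₂ v₃ + sphericalAngle v₂ v₃ v₁ + sphericalAngle v₃ v₁ v₂ > π := by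
  intro n₁ n₂ n₃ v₁ v₂ v₃ a1 a2 a3 h1 h2 h3 b1 b2 b3 b4 b5 b6 hli
  have := model_triangle_angle_sum_gt_pi' n₁ n₂ n₃ v₁ v₂ v₃ a1 a2 a3 h1 h2 h3 b1 b2 b3 b4 b5
    b6 hli
  simpa only [sphericalAngle] using this

end
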